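/- Let k be a commutative ring, R a commutative k-algebra, B an R-algebra, and N a (B,R)-dimodule. The map η_{B,N} : Der_k(B,N) → Der_k(R, Cent_k(B,N)), defined by (η_{B,N}(d)(r))(b) = d(rb) − r·d(b), is a well-defined k-linear map (i.e., η_{B,N}(d) satisfies the derivation identity η(d)(r₁r₂) = η(d)(r₁)·r₂ + r₁·η(d)(r₂) in Cent_k(B,N)), and its kernel is exactly Der_R(B,N): a k-linear derivation d : B → N satisfies η_{B,N}(d) = 0 if and only if d is R-linear. -/

import Mathlib

/-- The `k`-submodule `Der_k(B,N)` of `Hom_k(B,N)`: `k`-linear derivations of the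
`R`-algebra `B` (multiplication `mulB`) with values in the `(B,R)`-dimodule `N`. -/
def derkSubmodule {k R B N : Type*} [CommRing k] [CommRing R] [Algebra k R]
    [AddCommGroup B] [Module k B] [Module R B] [IsScalarTower k R B]
    [AddCommGroup N] [Module k N] [Module R N] [IsScalarTower k R N]
    (mulB : B →ₗ[R] B →ₗ[R] B)
    (lactN : B →ₗ[R] N →ₗ[R] N) (ractN : N →ₗ[R] B →ₗ[R] N) :
    Submodule k (B →ₗ[k] N) where
  carrier := {d | ∀ b₁ b₂ : B, d (mulB b₁ b₂) = ractN (d b₁) b₂ + lactN b₁ (d b₂)}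
  add_mem' := by
    intro f g hf hg b₁ b₂
    simp only [LinearMap.add_apply, hf b₁ b₂, hg b₁ b₂, map_add, LinearMap.add_apply]
    abel
  zero_mem' := by intro b₁ b₂; simp
  smul_mem' := by
    intro c f hf b₁ b₂
    simp only [LinearMap.smul_apply, hf b₁ b₂, smul_add,
      LinearMap.map_smul_of_tower, LinearMap.smul_apply]

/-- The `k`-submodule `Der_k(R, Cent_k(B,N))` of `Hom_k(R, Hom_k(B,N))`: `k`-linear
maps `D` on `R` whose values are centroidal transformations and which satisfy the
Leibniz rule `D(r₁r₂) = D(r₁)·r₂ + r₁·D(r₂)` for the `R`-bimodule structure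
`(r·χ)(b) = r • χ(b)`, `(χ·r)(b) = χ(r • b)` of the centroid. -/
def derRCentSubmodule {k R B N : Type*} [CommRing k] [CommRing R] [Algebra k R]
    [AddCommGroup B] [Module k B] [Module R B] [IsScalarTower k R B]
    [AddCommGroup N] [Module k N] [Module R N] [IsScalarTower k R N]
    (mulB : B →ₗ[R] B →ₗ[R] B)
    (lactN : B →ₗ[R] N →ₗ[R] N) (ractN : N →ₗ[R] B →ₗ[R] N) :
    Submodule k (R →ₗ[k] (B →ₗ[k] N)) where
  carrier := {D |
    (∀ (r : R) (b₁ b₂ : B),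
      D r (mulB b₁ b₂) = ractN (D r b₁) b₂ ∧ D r (mulB b₁ b₂) = lactN b₁ (D r b₂)) ∧
    (∀ (r₁ r₂ : R) (b : B),
      D (r₁ * r₂) b = D r₁ (r₂ • b) + r₁ • D r₂ b)}
  add_mem' := by
    intro f g hf hg
    refine ⟨fun r b₁ b₂ => ?_, fun r₁ r₂ b => ?_⟩
    · constructor
      · simp only [LinearMap.add_apply, (hf.1 r b₁ b₂).1, (hg.1 r b₁ b₂).1, map_add,
          LinearMap.add_apply]
      · simp only [LinearMap.add_apply, (hf.1 r b₁ b₂).2, (hg.1 r b₁ b₂).2, map_add]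
    · simp only [LinearMap.add_apply, hf.2 r₁ r₂ b, hg.2 r₁ r₂ b, smul_add]
      abel
  zero_mem' := by
    refine ⟨fun r b₁ b₂ => ?_, fun r₁ r₂ b => ?_⟩ <;> simp
  smul_mem' := by
    intro c f hf
    refine ⟨fun r b₁ b₂ => ?_, fun r₁ r₂ b => ?_⟩
    · constructor
      · simp only [LinearMap.smul_apply, (hf.1 r b₁ b₂).1,
          LinearMap.map_smul_of_tower, LinearMap.smul_apply]
      · simp only [LinearMap.smul_apply, (hf.1 r b₁ b₂).2, LinearMap.map_smul_of_tower]
    · simp only [LinearMap.smul_apply, hf.2 r₁ r₂ b, smul_add, smul_comm c r₁]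

/-- Auxiliary: the map `r ↦ (b ↦ d (r • b) - r • d b)` as a `k`-bilinear map. -/
def etaAux {k R B N : Type*} [CommRing k] [CommRing R] [Algebra k R]
    [AddCommGroup B] [Module k B] [Module R B] [IsScalarTower k R B]
    [AddCommGroup N] [Module k N] [Module R N] [IsScalarTower k R N]
    (d : B →ₗ[k] N) : R →ₗ[k] (B →ₗ[k] N) where
  toFun r :=
    { toFun := fun b => d (r • b) - r • d b
      map_add' := fun b₁ b₂ => by simp [smul_add]; abel
      map_smul' := fun c b => by
        simp [smul_comm r c, smul_sub] }
  map_add' r₁ r₂ := by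
    ext b; simp [add_smul]; abel
  map_smul' c r := by
    ext b; simp [smul_assoc, smul_sub]

/-- Let `R` be a commutative `k`-algebra, `B` an `R`-algebra and
`N` a `(B,R)`-dimodule.  The map `η_{B,N} : Der_k(B,N) → Der_k(R, Cent_k(B,N))`
determined by `(η(d)(r))(b) = d(r • b) − r • d(b)` is a well-defined `k`-linear map
whose kernel is exactly `Der_R(B,N)`: `η(d) = 0` iff `d` is `R`-linear. -/
theorem stmt_10 {k R B N : Type*} [CommRing k] [CommRing R] [Algebra k R]
    [AddCommGroup B] [Module k B] [Module R B] [IsScalarTower k R B]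
    [AddCommGroup N] [Module k N] [Module R N] [IsScalarTower k R N]
    (mulB : B →ₗ[R] B →ₗ[R] B)
    (lactN : B →ₗ[R] N →ₗ[R] N) (ractN : N →ₗ[R] B →ₗ[R] N) :
    ∃ η : ↥(derkSubmodule (k := k) mulB lactN ractN) →ₗ[k]
        ↥(derRCentSubmodule (k := k) mulB lactN ractN),
      (∀ (d : ↥(derkSubmodule (k := k) mulB lactN ractN)) (r : R) (b : B),
        ((η d).1 r) b =
          d.1 (r • b) - r • d.1 b) ∧
      (∀ d : ↥(derkSubmodule (k := k) mulB lactN ractN),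
        (η d).1 = 0 ↔ ∀ (r : R) (b : B),
          d.1 (r • b) = r • d.1 b) := by
  have hmem : ∀ d : ↥(derkSubmodule (k := k) mulB lactN ractN),
      etaAux d.1 ∈ derRCentSubmodule (k := k) mulB lactN ractN := by
    intro d
    refine ⟨fun r b₁ b₂ => ?_, fun r₁ r₂ b => ?_⟩
    · have hd := d.2
      constructor
      · show d.1 (r • mulB b₁ b₂) - r • d.1 (mulB b₁ b₂)
            = ractN (d.1 (r • b₁) - r • d.1 b₁) b₂
        have h1 : r • mulB b₁ b₂ = mulB (r • b₁) b₂ := by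
          simp [LinearMap.map_smul]
        rw [h1, hd (r • b₁) b₂, hd b₁ b₂]
        simp [smul_add, LinearMap.map_smul, sub_add_eq_sub_sub]
        abel
      · show d.1 (r • mulB b₁ b₂) - r • d.1 (mulB b₁ b₂)
            = lactN b₁ (d.1 (r • b₂) - r • d.1 b₂)
        have h1 : r • mulB b₁ b₂ = mulB b₁ (r • b₂) := by
          simp [LinearMap.map_smul]
        rw [h1, hd b₁ (r • b₂), hd b₁ b₂]
        simp only [smul_add, LinearMap.map_smul, map_sub]
        abel
    · show d.1 ((r₁ * r₂) • b) - (r₁ * r₂) • d.1 b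
        = (d.1 (r₁ • r₂ • b) - r₁ • d.1 (r₂ • b))
          + r₁ • (d.1 (r₂ • b) - r₂ • d.1 b)
      rw [mul_smul, smul_sub, mul_smul]
      abel
  refine ⟨{ toFun := fun d => ⟨etaAux d.1, hmem d⟩
            map_add' := fun d₁ d₂ => by
              ext r b
              show (d₁.1 + d₂.1) (r • b) - r • (d₁.1 + d₂.1) b
                = (d₁.1 (r • b) - r • d₁.1 b) + (d₂.1 (r • b) - r • d₂.1 b)
              simp [smul_add]; abel
            map_smul' := fun c d => by
              ext r b
              show (c • d.1) (r • b) - r • (c • d.1) b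
                = c • (d.1 (r • b) - r • d.1 b)
              simp [smul_sub, smul_comm c r] }, ?_, ?_⟩
  · intro d r b; rfl
  · intro d
    constructor
    · intro h r b
      have h' : d.1 (r • b) - r • d.1 b = 0 := by
        have := congrArg (fun f : R →ₗ[k] (B →ₗ[k] N) => f r b) h
        simp at this; exact this
      exact sub_eq_zero.mp h'
    · intro h
      ext r b
      show d.1 (r • b) - r • d.1 b = 0
      rw [h r b, sub_self]
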